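/- arXiv:1609.05661 — 3 statements merged into one kernel-verified Lean document; each statement's English description precedes it below -/
import Mathlib

section
/- Let f_1, …, f_n be gambles on a finite nonempty set Ω such that every nonzero p : Ω → ℝ with ⟨p, f_i⟩ ≥ 0 for all i satisfies ⟨p, 1_Ω⟩ > 0, let M = {p : Ω → ℝ : ⟨p, f_i⟩ ≥ 0 for all i, ⟨p, 1_Ω⟩ = 1} be nonempty, let E ∈ M, let h be a gamble with ⟨E, h⟩ = min_{p∈M} ⟨p, h⟩, and set I = {i : ⟨E, f_i⟩ = 0}. For each i let f'_i = f_i − (⟨f_i, 1_Ω⟩/|Ω|)·1_Ω, so that ⟨f'_i, 1_Ω⟩ = 0. Then there exist α'_i ≥ 0 for i ∈ I and β' ∈ ℝ such that h = Σ_{i∈I} α'_i f'_i + β'·1_Ω, and moreover ‖Σ_{i∈I} α'_i f'_i‖ ≤ ‖Σ_{i∈I} α'_i f'_i + β·1_Ω‖ for every β ∈ ℝ. -/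
open scoped BigOperators

/-- Inner product of gambles: `⟨f,g⟩ = ∑ x, f x * g x`. -/
noncomputable def ip {Ω : Type*} [Fintype Ω] (f g : Ω → ℝ) : ℝ := ∑ x, f x * g x

/-- Euclidean norm of a gamble. -/
noncomputable def nrm {Ω : Type*} [Fintype Ω] (f : Ω → ℝ) : ℝ := Real.sqrt (ip f f)

/-- The constant gamble equal to `1` on `Ω`. -/
def oneG (Ω : Type*) : Ω → ℝ := fun _ => 1

section helpers
variable {Ω : Type*} [Fintype Ω]

lemma ip_comm (f g : Ω → ℝ) : ip f g = ip g f := by simp [ip, mul_comm]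

lemma ip_add_left (f g h : Ω → ℝ) : ip (f + g) h = ip f h + ip g h := by
  simp [ip, add_mul, Finset.sum_add_distrib]

lemma ip_add_right (f g h : Ω → ℝ) : ip f (g + h) = ip f g + ip f h := by
  simp [ip, mul_add, Finset.sum_add_distrib]

lemma ip_smul_left (c : ℝ) (f g : Ω → ℝ) : ip (c • f) g = c * ip f g := by
  simp only [ip, Pi.smul_apply, smul_eq_mul, Finset.mul_sum]
  exact Finset.sum_congr rfl fun x _ => by ring

lemma ip_smul_right (c : ℝ) (f g : Ω → ℝ) : ip f (c • g) = c * ip f g := by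
  rw [ip_comm, ip_smul_left, ip_comm]

lemma ip_sub_left (f g h : Ω → ℝ) : ip (f - g) h = ip f h - ip g h := by
  simp [ip, sub_mul, Finset.sum_sub_distrib]

lemma ip_sub_right (f g h : Ω → ℝ) : ip f (g - h) = ip f g - ip f h := by
  simp [ip, mul_sub, Finset.sum_sub_distrib]

lemma ip_neg_left (f g : Ω → ℝ) : ip (-f) g = -ip f g := by
  simp [ip, Finset.sum_neg_distrib]

lemma ip_neg_right (f g : Ω → ℝ) : ip f (-g) = -ip f g := by
  rw [ip_comm, ip_neg_left, ip_comm]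

lemma ip_sum_right {ι : Type*} (s : Finset ι) (f : Ω → ℝ) (g : ι → Ω → ℝ) :
    ip f (∑ i ∈ s, g i) = ∑ i ∈ s, ip f (g i) := by
  classical
  induction s using Finset.induction with
  | empty => simp [ip]
  | insert _ _ hi ih => rw [Finset.sum_insert hi, ip_add_right, ih, Finset.sum_insert hi]

lemma ip_sum_left {ι : Type*} (s : Finset ι) (f : Ω → ℝ) (g : ι → Ω → ℝ) :
    ip (∑ i ∈ s, g i) f = ∑ i ∈ s, ip (g i) f := by
  rw [ip_comm, ip_sum_right]; exact Finset.sum_congr rfl fun i _ => ip_comm _ _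

lemma ip_self_nonneg (f : Ω → ℝ) : 0 ≤ ip f f :=
  Finset.sum_nonneg fun x _ => mul_self_nonneg _

lemma ip_self_eq_zero {f : Ω → ℝ} (h : ip f f = 0) : f = 0 := by
  funext x
  have := (Finset.sum_eq_zero_iff_of_nonneg (fun y _ => mul_self_nonneg (f y))).mp h x
    (Finset.mem_univ x)
  have := mul_self_eq_zero.mp this
  simpa using this

lemma ip_one_one : ip (oneG Ω) (oneG Ω) = (Fintype.card Ω : ℝ) := by
  simp [ip, oneG, Finset.card_univ]

end helpers

lemma farkas {Ω : Type*} [Fintype Ω] :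
    ∀ (m : ℕ) (g : Fin m → Ω → ℝ) (h : Ω → ℝ),
    (∀ p : Ω → ℝ, (∀ i, 0 ≤ ip p (g i)) → 0 ≤ ip p h) →
    ∃ lam : Fin m → ℝ, (∀ i, 0 ≤ lam i) ∧ h = ∑ i, lam i • g i := by
  intro m
  induction m with
  | zero =>
    intro g h hyp
    have h1 : 0 ≤ ip h h := hyp h (fun i => i.elim0)
    have h2 : 0 ≤ ip (-h) h := hyp (-h) (fun i => i.elim0)
    rw [ip_neg_left] at h2
    have hh : h = 0 := ip_self_eq_zero (le_antisymm (by linarith) h1)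
    exact ⟨fun _ => 0, fun i => le_refl 0, by simp [hh]⟩
  | succ m IH =>
    intro g h hyp
    set g0 : Fin m → Ω → ℝ := Fin.init g with hg0
    set gm : Ω → ℝ := g (Fin.last m) with hgm
    by_cases hcase : ∀ p : Ω → ℝ, (∀ i, 0 ≤ ip p (g0 i)) → 0 ≤ ip p h
    · obtain ⟨lam, hlam, hsum⟩ := IH g0 h hcase
      refine ⟨Fin.snoc lam 0, ?_, ?_⟩
      · intro i
        induction i using Fin.lastCases with
        | last => simp
        | cast i => simp [hlam i]
      · rw [Fin.sum_univ_castSucc]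
        simp only [Fin.snoc_castSucc, Fin.snoc_last, zero_smul, add_zero]
        exact hsum
    · push_neg at hcase
      obtain ⟨p0, hp0g, hp0h⟩ := hcase
      have hgmneg : ip p0 gm < 0 := by
        by_contra hcon
        push_neg at hcon
        have hall : ∀ i, 0 ≤ ip p0 (g i) := by
          intro i
          induction i using Fin.lastCases with
          | last => exact hcon
          | cast j => exact hp0g j
        exact absurd (hyp p0 hall) (not_le.mpr hp0h)
      set c : ℝ := ip p0 gm with hcdef
      have hcne : c ≠ 0 := ne_of_lt hgmneg
      set gh : Fin m → Ω → ℝ := fun i => g0 i - (ip p0 (g0 i) / c) • gm with hgh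
      set hh : Ω → ℝ := h - (ip p0 h / c) • gm with hhh
      have claim : ∀ p : Ω → ℝ, (∀ i, 0 ≤ ip p (gh i)) → 0 ≤ ip p hh := by
        intro p hp
        set ph : Ω → ℝ := p - (ip p gm / c) • p0 with hph
        have key : ∀ q : Ω → ℝ, ip ph q = ip p q - ip p0 q / c * ip p gm := by
          intro q
          rw [hph, ip_sub_left, ip_smul_left, ip_comm p0 q]
          ring
        have h1 : ∀ i : Fin (m + 1), 0 ≤ ip ph (g i) := by
          intro i
          induction i using Fin.lastCases with
          | last =>
            rw [key, ← hgm, ← hcdef]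
            field_simp
            simp
          | cast j =>
            have hthis := hp j
            rw [hgh] at hthis
            simp only at hthis
            rw [ip_sub_right, ip_smul_right] at hthis
            have hgi : g (Fin.castSucc j) = g0 j := rfl
            rw [hgi, key]
            linarith
        have h2 := hyp ph h1
        rw [key] at h2
        rw [hhh, ip_sub_right, ip_smul_right]
        linarith
      obtain ⟨lam, hlam, hsum⟩ := IH gh hh claim
      set mu : ℝ := (ip p0 h - ∑ i, lam i * ip p0 (g0 i)) / c with hmu
      have hsumnn : 0 ≤ ∑ i, lam i * ip p0 (g0 i) :=
        Finset.sum_nonneg fun i _ => mul_nonneg (hlam i) (hp0g i)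
      have hmupos : 0 ≤ mu :=
        (div_pos_of_neg_of_neg (by linarith) hgmneg).le
      refine ⟨Fin.snoc lam mu, ?_, ?_⟩
      · intro i
        induction i using Fin.lastCases with
        | last => simpa using hmupos
        | cast i => simpa using hlam i
      · rw [Fin.sum_univ_castSucc]
        simp only [Fin.snoc_castSucc, Fin.snoc_last]
        have hexp : h = (∑ i, lam i • gh i) + (ip p0 h / c) • gm := by
          rw [← hsum, hhh]; abel
        rw [hexp]
        have hsplit : ∑ i, lam i • gh i
            = (∑ i, lam i • g0 i) - (∑ i, lam i * (ip p0 (g0 i) / c)) • gm := by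
          rw [hgh]
          simp only [smul_sub, smul_smul]
          rw [Finset.sum_sub_distrib, Finset.sum_smul]
        rw [hsplit]
        have hcs : ∑ i : Fin m, lam i • g (Fin.castSucc i) = ∑ i, lam i • g0 i :=
          Finset.sum_congr rfl fun i _ => rfl
        rw [hcs, ← hgm]
        have hmu' : mu = ip p0 h / c - ∑ i, lam i * (ip p0 (g0 i) / c) := by
          rw [hmu, sub_div, Finset.sum_div]
          congr 1
          exact Finset.sum_congr rfl fun i _ => by ring
        rw [hmu', sub_smul]
        abel


/-- decomposition of `h` in terms of the centered active constraints
`f' i = f i − (⟨f i, 1_Ω⟩/|Ω|)·1_Ω`, together with the minimal-norm property. -/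
theorem stmt4 {Ω : Type*} [Fintype Ω] [Nonempty Ω] {n : ℕ} (f : Fin n → Ω → ℝ)
    (hpos : ∀ p : Ω → ℝ, p ≠ 0 → (∀ i, 0 ≤ ip p (f i)) → 0 < ip p (oneG Ω))
    (M : Set (Ω → ℝ))
    (hM : M = {p | (∀ i, 0 ≤ ip p (f i)) ∧ ip p (oneG Ω) = 1})
    (hMne : M.Nonempty)
    (E : Ω → ℝ) (hE : E ∈ M)
    (h : Ω → ℝ) (hmin : ∀ p ∈ M, ip E h ≤ ip p h)
    (I : Set (Fin n)) (hI : I = {i | ip E (f i) = 0})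
    (f' : Fin n → Ω → ℝ)
    (hf' : ∀ i, f' i = f i - (ip (f i) (oneG Ω) / (Fintype.card Ω : ℝ)) • oneG Ω) :
    ∃ (α' : Fin n → ℝ) (β' : ℝ), (∀ i, 0 ≤ α' i) ∧ (∀ i, i ∉ I → α' i = 0) ∧
      h = (∑ i, α' i • f' i) + β' • oneG Ω ∧
      ∀ β : ℝ, nrm (∑ i, α' i • f' i) ≤ nrm ((∑ i, α' i • f' i) + β • oneG Ω) := by
  classical
  rw [hM] at hE
  obtain ⟨hEf, hE1⟩ := hE
  have hcard : (Fintype.card Ω : ℝ) ≠ 0 := Nat.cast_ne_zero.mpr Fintype.card_ne_zero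
  set g0 : Fin n → Ω → ℝ := fun i => if i ∈ I then f i else 0 with hg0
  set g : Fin (n + 2) → Ω → ℝ :=
    Fin.snoc (Fin.snoc g0 (oneG Ω)) (-(oneG Ω)) with hg
  -- hypothesis for Farkas
  have hyp : ∀ p : Ω → ℝ, (∀ i, 0 ≤ ip p (g i)) → 0 ≤ ip p h := by
    intro p hp
    have ha := hp (Fin.last (n + 1))
    have hb := hp (Fin.castSucc (Fin.last n))
    rw [hg] at ha hb
    rw [Fin.snoc_last] at ha
    rw [Fin.snoc_castSucc, Fin.snoc_last] at hb
    rw [ip_neg_right] at ha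
    have hp1 : ip p (oneG Ω) = 0 := le_antisymm (by linarith) hb
    have hpI : ∀ i : Fin n, i ∈ I → 0 ≤ ip p (f i) := by
      intro i hi
      have hthis := hp (Fin.castSucc (Fin.castSucc i))
      rw [hg, Fin.snoc_castSucc, Fin.snoc_castSucc] at hthis
      rw [hg0] at hthis
      simpa [hi] using hthis
    set S : ℝ := ∑ j, (if ip E (f j) = 0 then 0 else |ip p (f j)| / ip E (f j)) with hS
    have hterm_nn : ∀ j : Fin n, 0 ≤ (if ip E (f j) = 0 then 0 else |ip p (f j)| / ip E (f j)) := by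
      intro j
      split_ifs with hj
      · exact le_refl 0
      · have : 0 < ip E (f j) := lt_of_le_of_ne (hEf j) (Ne.symm hj)
        positivity
    have hSnn : 0 ≤ S := Finset.sum_nonneg fun j _ => hterm_nn j
    have h2 : (0:ℝ) < 1 + S := by linarith
    set ε : ℝ := 1 / (1 + S) with hε
    have hεpos : 0 < ε := by positivity
    set p' : Ω → ℝ := E + ε • p with hp'
    have hp'f : ∀ i, 0 ≤ ip p' (f i) := by
      intro i
      rw [hp', ip_add_left, ip_smul_left]
      by_cases hi : ip E (f i) = 0
      · have hiI : i ∈ I := by rw [hI]; exact hi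
        have := hpI i hiI
        rw [hi]
        have : 0 ≤ ε * ip p (f i) := mul_nonneg hεpos.le this
        linarith
      · have hEpos : 0 < ip E (f i) := lt_of_le_of_ne (hEf i) (Ne.symm hi)
        by_cases hpi : 0 ≤ ip p (f i)
        · have : 0 ≤ ε * ip p (f i) := mul_nonneg hεpos.le hpi
          linarith
        · push_neg at hpi
          have hterm : |ip p (f i)| / ip E (f i) ≤ S := by
            rw [hS]
            have := Finset.single_le_sum (fun j _ => hterm_nn j) (Finset.mem_univ i)
            simpa [hi] using this
          rw [abs_of_neg hpi] at hterm
          have h1 : -ip p (f i) ≤ S * ip E (f i) := by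
            rw [div_le_iff₀ hEpos] at hterm
            linarith
          have key : ip E (f i) + ε * ip p (f i)
              = ((1 + S) * ip E (f i) + ip p (f i)) / (1 + S) := by
            rw [hε]; field_simp
          rw [key]
          apply div_nonneg _ h2.le
          nlinarith
    have hp'1 : ip p' (oneG Ω) = 1 := by
      rw [hp', ip_add_left, ip_smul_left, hE1, hp1]; ring
    have hp'M : p' ∈ M := by rw [hM]; exact ⟨hp'f, hp'1⟩
    have hm := hmin p' hp'M
    rw [hp', ip_add_left, ip_smul_left] at hm
    by_contra hcon
    push_neg at hcon
    have : ε * ip p h < 0 := mul_neg_of_pos_of_neg hεpos hcon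
    linarith
  obtain ⟨lam, hlam, hsum⟩ := farkas (n + 2) g h hyp
  set α' : Fin n → ℝ :=
    fun i => if i ∈ I then lam (Fin.castSucc (Fin.castSucc i)) else 0 with hα
  set d : Fin n → ℝ := fun i => ip (f i) (oneG Ω) / (Fintype.card Ω : ℝ) with hd
  set β' : ℝ := (∑ i, α' i * d i) + lam (Fin.castSucc (Fin.last n)) - lam (Fin.last (n + 1))
    with hβ'
  have hα'nn : ∀ i, 0 ≤ α' i := by
    intro i
    rw [hα]
    dsimp only
    split_ifs with hi
    · exact hlam _
    · exact le_refl 0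
  have hα'I : ∀ i, i ∉ I → α' i = 0 := by
    intro i hi
    simp [hα, hi]
  -- decomposition of the sum
  have hsum2 : h = (∑ i : Fin n, lam (Fin.castSucc (Fin.castSucc i)) • g0 i)
      + lam (Fin.castSucc (Fin.last n)) • oneG Ω
      + lam (Fin.last (n + 1)) • (-(oneG Ω)) := by
    rw [hsum, Fin.sum_univ_castSucc]
    rw [hg]
    simp only [Fin.snoc_last, Fin.snoc_castSucc]
    rw [Fin.sum_univ_castSucc]
    simp only [Fin.snoc_last, Fin.snoc_castSucc]
  have hg0α : ∀ i, lam (Fin.castSucc (Fin.castSucc i)) • g0 i = α' i • f i := by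
    intro i
    rw [hg0, hα]
    by_cases hi : i ∈ I <;> simp [hi]
  have hfd : ∀ i, (f i : Ω → ℝ) = f' i + d i • oneG Ω := by
    intro i
    rw [hf' i, hd]
    abel
  have hsum3 : (∑ i : Fin n, lam (Fin.castSucc (Fin.castSucc i)) • g0 i)
      = (∑ i, α' i • f' i) + (∑ i, α' i * d i) • oneG Ω := by
    calc (∑ i : Fin n, lam (Fin.castSucc (Fin.castSucc i)) • g0 i)
        = ∑ i, α' i • f i := Finset.sum_congr rfl fun i _ => hg0α i
      _ = ∑ i, (α' i • f' i + (α' i * d i) • oneG Ω) := by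
          refine Finset.sum_congr rfl fun i _ => ?_
          rw [hfd i, smul_add, mul_smul]
      _ = (∑ i, α' i • f' i) + (∑ i, α' i * d i) • oneG Ω := by
          rw [Finset.sum_add_distrib, Finset.sum_smul]
  have hdecomp : h = (∑ i, α' i • f' i) + β' • oneG Ω := by
    rw [hsum2, hsum3, hβ']
    rw [smul_neg, sub_smul, add_smul]
    abel
  -- orthogonality
  have hforth : ∀ i, ip (f' i) (oneG Ω) = 0 := by
    intro i
    rw [hf' i, ip_sub_left, ip_smul_left, ip_one_one]
    field_simp
    simp
  have hAorth : ip (∑ i, α' i • f' i) (oneG Ω) = 0 := by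
    rw [ip_sum_left]
    refine Finset.sum_eq_zero fun i _ => ?_
    rw [ip_smul_left, hforth i, mul_zero]
  refine ⟨α', β', hα'nn, hα'I, hdecomp, ?_⟩
  intro β
  set A : Ω → ℝ := ∑ i, α' i • f' i with hA
  rw [nrm, nrm]
  apply Real.sqrt_le_sqrt
  have e : ip (A + β • oneG Ω) (A + β • oneG Ω)
      = ip A A + 2 * β * ip A (oneG Ω) + β ^ 2 * ip (oneG Ω) (oneG Ω) := by
    simp only [ip_add_left, ip_add_right, ip_smul_left, ip_smul_right]
    rw [ip_comm (oneG Ω) A]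
    ring
  rw [e, hAorth, ip_one_one]
  have : 0 ≤ β ^ 2 * (Fintype.card Ω : ℝ) := by positivity
  linarith
end

section
/- Let Ω, K, b, M, E̲ and the faces M_f be as in the setting of a coherent assessment with K nonempty, and let P̲ be an extension of (K, b). Then for every gamble h, P̲(h) ≤ min_{f ∈ K} max_{F ∈ ext(M_f)} ⟨F, h⟩, where ext(M_f) denotes the (nonempty, finite) set of extreme points of the face M_f. -/
open scoped BigOperators

/-- A probability mass vector on `Ω`. -/
def IsPMV {Ω : Type*} [Fintype Ω] (p : Ω → ℝ) : Prop :=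
  (∀ x, 0 ≤ p x) ∧ ∑ x, p x = 1

lemma ip_cont {Ω : Type*} [Fintype Ω] (g : Ω → ℝ) :
    Continuous (fun p : Ω → ℝ => ip p g) := by
  unfold ip
  exact continuous_finset_sum _ fun x _ => (continuous_apply x).mul continuous_const

lemma ip_linear {Ω : Type*} [Fintype Ω] (g : Ω → ℝ) :
    IsLinearMap ℝ (fun p : Ω → ℝ => ip p g) := by
  constructor
  · intro p q; simp [ip, add_mul, Finset.sum_add_distrib]
  · intro c p; simp [ip, Finset.mul_sum, mul_assoc]

lemma pmv_convex {Ω : Type*} [Fintype Ω] : Convex ℝ {p : Ω → ℝ | IsPMV p} := by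
  intro p hp q hq a c ha hc hac
  constructor
  · intro x
    have := hp.1 x; have := hq.1 x
    have : 0 ≤ a * p x + c * q x := by positivity
    simpa using this
  · have : ∑ x, (a * p x + c * q x) = a * ∑ x, p x + c * ∑ x, q x := by
      rw [Finset.sum_add_distrib, Finset.mul_sum, Finset.mul_sum]
    simp only [Pi.add_apply, Pi.smul_apply, smul_eq_mul]
    rw [this, hp.2, hq.2]; linarith

lemma pmv_compact {Ω : Type*} [Fintype Ω] (S : Set (Ω → ℝ)) (hcl : IsClosed S)
    (hS : ∀ p ∈ S, IsPMV p) : IsCompact S := by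
  have hsub : S ⊆ Set.pi Set.univ (fun _ : Ω => Set.Icc (0:ℝ) 1) := by
    intro p hp x _
    obtain ⟨hpos, hsum⟩ := hS p hp
    refine ⟨hpos x, ?_⟩
    calc p x ≤ ∑ y, p y := Finset.single_le_sum (fun y _ => hpos y) (Finset.mem_univ x)
    _ = 1 := hsum
  exact IsCompact.of_isClosed_subset (isCompact_univ_pi fun _ => isCompact_Icc) hcl hsub

/-- for any extension `P̲` of a coherent assessment `(K, b)` and any gamble
`h`, `P̲(h) ≤ min_{f ∈ K} max_{F ∈ ext(M_f)} ⟨F, h⟩`, where `ext(M_f)` is the set of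
extreme points of the face `M_f`. -/
theorem stmt14 {Ω : Type*} [Fintype Ω] [Nonempty Ω]
    (K : Finset (Ω → ℝ)) (hK : K.Nonempty) (b : (Ω → ℝ) → ℝ)
    (M : Set (Ω → ℝ)) (hM : M = {p | IsPMV p ∧ ∀ g ∈ K, b g ≤ ip p g})
    (hMne : M.Nonempty)
    (lE : (Ω → ℝ) → ℝ)
    (hlE : ∀ h : Ω → ℝ, IsLeast {r : ℝ | ∃ p ∈ M, r = ip p h} (lE h))
    (hcoh : ∀ g ∈ K, lE g = b g)
    (M' : Set (Ω → ℝ)) (hne' : M'.Nonempty) (hcomp' : IsCompact M')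
    (hconv' : Convex ℝ M') (hpmv' : ∀ p ∈ M', IsPMV p)
    (lP : (Ω → ℝ) → ℝ)
    (hlP : ∀ h : Ω → ℝ, IsLeast {r : ℝ | ∃ p ∈ M', r = ip p h} (lP h))
    (hb' : ∀ g ∈ K, lP g = b g) :
    ∀ h : Ω → ℝ,
      lP h ≤ sInf {r : ℝ | ∃ f ∈ K,
        r = sSup {s : ℝ | ∃ F ∈ Set.extremePoints ℝ {q ∈ M | ip q f = lE f},
          s = ip F h}} := by
  intro h
  -- M is closed and convex
  have hMclosed : IsClosed M := by
    rw [hM]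
    have h1 : IsClosed {p : Ω → ℝ | IsPMV p} := by
      have : {p : Ω → ℝ | IsPMV p} =
          (⋂ x, {p : Ω → ℝ | 0 ≤ p x}) ∩ {p | ∑ x, p x = 1} := by
        ext p; simp [IsPMV, Set.mem_iInter]
      rw [this]
      exact (isClosed_iInter fun x => isClosed_le continuous_const (continuous_apply x)).inter
        (isClosed_eq (continuous_finset_sum _ fun x _ => continuous_apply x) continuous_const)
    have h2 : IsClosed (⋂ g ∈ K, {p : Ω → ℝ | b g ≤ ip p g}) :=
      isClosed_biInter fun g _ => isClosed_le continuous_const (ip_cont g)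
    have : {p : Ω → ℝ | IsPMV p ∧ ∀ g ∈ K, b g ≤ ip p g} =
        {p : Ω → ℝ | IsPMV p} ∩ ⋂ g ∈ K, {p : Ω → ℝ | b g ≤ ip p g} := by
      ext p; simp [Set.mem_iInter]
    rw [this]; exact h1.inter h2
  have hMconv : Convex ℝ M := by
    rw [hM]
    have : {p : Ω → ℝ | IsPMV p ∧ ∀ g ∈ K, b g ≤ ip p g} =
        {p : Ω → ℝ | IsPMV p} ∩ ⋂ g ∈ K, {p : Ω → ℝ | b g ≤ ip p g} := by
      ext p; simp [Set.mem_iInter]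
    rw [this]
    exact pmv_convex.inter (convex_iInter fun g => convex_iInter fun _ =>
      convex_halfSpace_ge (ip_linear g) (b g))
  have hMcomp : IsCompact M := pmv_compact M hMclosed (by rw [hM]; exact fun p hp => hp.1)
  -- M' ⊆ M
  have hM'M : M' ⊆ M := by
    intro p hp
    rw [hM]
    refine ⟨hpmv' p hp, fun g hg => ?_⟩
    have := (hlP g).2 ⟨p, hp, rfl⟩
    rw [hb' g hg] at this
    exact this
  -- lower bound for each f ∈ K
  have key : ∀ f ∈ K, lP h ≤ sSup {s : ℝ | ∃ F ∈ Set.extremePoints ℝ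
      {q ∈ M | ip q f = lE f}, s = ip F h} := by
    intro f hf
    set Mf : Set (Ω → ℝ) := {q ∈ M | ip q f = lE f} with hMf
    -- find p_f ∈ M' with ip p_f f = lE f
    obtain ⟨pf, hpfM', hpf⟩ := (hlP f).1
    have hpfMf : pf ∈ Mf := by
      refine ⟨hM'M hpfM', ?_⟩
      rw [← hpf, hb' f hf, hcoh f hf]
    have hMfclosed : IsClosed Mf :=
      hMclosed.inter (isClosed_eq (ip_cont f) continuous_const)
    have hMfcomp : IsCompact Mf := hMcomp.of_isClosed_subset hMfclosed (Set.sep_subset _ _)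
    have hMfconv : Convex ℝ Mf := by
      have : Mf = M ∩ {q | ip q f = lE f} := rfl
      rw [this]
      exact hMconv.inter (convex_hyperplane (ip_linear f) (lE f))
    set E := Set.extremePoints ℝ Mf with hE
    have hEne : E.Nonempty := hMfcomp.extremePoints_nonempty ⟨pf, hpfMf⟩
    set S := {s : ℝ | ∃ F ∈ E, s = ip F h} with hS
    have hSimg : S = (fun F => ip F h) '' E := by
      ext s; simp [hS, eq_comm]
    have hSne : S.Nonempty := by
      obtain ⟨F, hF⟩ := hEne; exact ⟨ip F h, F, hF, rfl⟩
    have hSbdd : BddAbove S := by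
      rw [hSimg]
      exact (hMfcomp.bddAbove_image (ip_cont h).continuousOn).mono
        (Set.image_mono extremePoints_subset)
    -- the closed convex set {q | ip q h ≤ sSup S} contains E
    have hC : Mf ⊆ {q : Ω → ℝ | ip q h ≤ sSup S} := by
      rw [← closure_convexHull_extremePoints hMfcomp hMfconv]
      refine closure_minimal ?_ (isClosed_le (ip_cont h) continuous_const)
      refine convexHull_min ?_ (convex_halfSpace_le (ip_linear h) (sSup S))
      intro F hF
      exact le_csSup hSbdd ⟨F, hF, rfl⟩
    have h1 : lP h ≤ ip pf h := (hlP h).2 ⟨pf, hpfM', rfl⟩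
    exact h1.trans (hC hpfMf)
  -- conclude with sInf
  apply le_csInf
  · obtain ⟨f, hf⟩ := hK
    exact ⟨_, f, hf, rfl⟩
  · rintro r ⟨f, hf, rfl⟩
    exact key f hf
end

section
/- Let Ω, K, b, M, E̲ and the faces M_f be as in the setting of a coherent assessment with K nonempty, and let P̲ and P̲' be two extensions of (K, b). Then for every gamble h, |P̲(h) − P̲'(h)| ≤ min_{f ∈ K} max_{F ∈ ext(M_f)} ⟨F, h⟩ − E̲(h). -/
open scoped BigOperators

lemma ip_continuous {Ω : Type*} [Fintype Ω] (g : Ω → ℝ) :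
    Continuous fun p : Ω → ℝ => ip p g := by
  unfold ip
  exact continuous_finset_sum _ fun x _ => (continuous_apply x).mul continuous_const

lemma ip_combo {Ω : Type*} [Fintype Ω] (p q g : Ω → ℝ) (a c : ℝ) :
    ip (a • p + c • q) g = a * ip p g + c * ip q g := by
  simp only [ip, Pi.add_apply, Pi.smul_apply, smul_eq_mul, add_mul, mul_assoc,
    Finset.sum_add_distrib, Finset.mul_sum]

lemma pmv_le_one {Ω : Type*} [Fintype Ω] {p : Ω → ℝ} (hp : IsPMV p) (x : Ω) : p x ≤ 1 := by
  rw [← hp.2]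
  exact Finset.single_le_sum (fun i _ => hp.1 i) (Finset.mem_univ x)

lemma ip_le_bound {Ω : Type*} [Fintype Ω] {p : Ω → ℝ} (hp : IsPMV p) (h : Ω → ℝ) :
    ip p h ≤ ∑ x, |h x| := by
  unfold ip
  apply Finset.sum_le_sum
  intro x _
  calc p x * h x ≤ p x * |h x| := mul_le_mul_of_nonneg_left (le_abs_self _) (hp.1 x)
    _ ≤ 1 * |h x| := mul_le_mul_of_nonneg_right (pmv_le_one hp x) (abs_nonneg _)
    _ = |h x| := one_mul _

/-- key: for compact convex set s, a point of s has `ip p h₀` bounded by sup over extreme pts. -/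
lemma le_sSup_extreme {Ω : Type*} [Fintype Ω] (h₀ : Ω → ℝ) {s : Set (Ω → ℝ)}
    (hcomp : IsCompact s) (hconv : Convex ℝ s) {B : ℝ} (hB : ∀ q ∈ s, ip q h₀ ≤ B)
    {p : Ω → ℝ} (hp : p ∈ s) :
    ip p h₀ ≤ sSup {r : ℝ | ∃ F ∈ Set.extremePoints ℝ s, r = ip F h₀} := by
  set S := {r : ℝ | ∃ F ∈ Set.extremePoints ℝ s, r = ip F h₀} with hS
  have hbdd : BddAbove S := by
    refine ⟨B, fun r hr => ?_⟩
    obtain ⟨F, hF, rfl⟩ := hr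
    exact hB F (extremePoints_subset hF)
  set C := {q : Ω → ℝ | ip q h₀ ≤ sSup S} with hC
  have hCclosed : IsClosed C := isClosed_le (ip_continuous h₀) continuous_const
  have hCconv : Convex ℝ C := by
    intro x hx y hy a c ha hc hac
    simp only [hC, Set.mem_setOf_eq] at hx hy ⊢
    rw [ip_combo]
    calc a * ip x h₀ + c * ip y h₀ ≤ a * sSup S + c * sSup S := by
          exact add_le_add (mul_le_mul_of_nonneg_left hx ha)
            (mul_le_mul_of_nonneg_left hy hc)
      _ = sSup S := by rw [← add_mul, hac, one_mul]
  have hsub : Set.extremePoints ℝ s ⊆ C := by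
    intro F hF
    exact le_csSup hbdd ⟨F, hF, rfl⟩
  have : s ⊆ C := by
    rw [← closure_convexHull_extremePoints hcomp hconv]
    exact closure_minimal (convexHull_min hsub hCconv) hCclosed
  exact this hp

/-- for two extensions `P̲`, `P̲'` of a coherent assessment `(K, b)` and any
gamble `h`, `|P̲(h) − P̲'(h)| ≤ min_{f ∈ K} max_{F ∈ ext(M_f)} ⟨F, h⟩ − E̲(h)`. -/
theorem stmt15 {Ω : Type*} [Fintype Ω] [Nonempty Ω]
    (K : Finset (Ω → ℝ)) (hK : K.Nonempty) (b : (Ω → ℝ) → ℝ)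
    (M : Set (Ω → ℝ)) (hM : M = {p | IsPMV p ∧ ∀ g ∈ K, b g ≤ ip p g})
    (hMne : M.Nonempty)
    (lE : (Ω → ℝ) → ℝ)
    (hlE : ∀ h : Ω → ℝ, IsLeast {r : ℝ | ∃ p ∈ M, r = ip p h} (lE h))
    (hcoh : ∀ g ∈ K, lE g = b g)
    (M₁ : Set (Ω → ℝ)) (hne₁ : M₁.Nonempty) (hcomp₁ : IsCompact M₁)
    (hconv₁ : Convex ℝ M₁) (hpmv₁ : ∀ p ∈ M₁, IsPMV p)
    (lP : (Ω → ℝ) → ℝ)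
    (hlP : ∀ h : Ω → ℝ, IsLeast {r : ℝ | ∃ p ∈ M₁, r = ip p h} (lP h))
    (hb₁ : ∀ g ∈ K, lP g = b g)
    (M₂ : Set (Ω → ℝ)) (hne₂ : M₂.Nonempty) (hcomp₂ : IsCompact M₂)
    (hconv₂ : Convex ℝ M₂) (hpmv₂ : ∀ p ∈ M₂, IsPMV p)
    (lP' : (Ω → ℝ) → ℝ)
    (hlP' : ∀ h : Ω → ℝ, IsLeast {r : ℝ | ∃ p ∈ M₂, r = ip p h} (lP' h))
    (hb₂ : ∀ g ∈ K, lP' g = b g) :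
    ∀ h : Ω → ℝ,
      |lP h - lP' h| ≤ sInf {r : ℝ | ∃ f ∈ K,
        r = sSup {s : ℝ | ∃ F ∈ Set.extremePoints ℝ {q ∈ M | ip q f = lE f},
          s = ip F h}} - lE h := by
  -- M is closed, bounded, convex
  have hMclosed : IsClosed M := by
    rw [hM]
    have : {p : Ω → ℝ | IsPMV p ∧ ∀ g ∈ K, b g ≤ ip p g} =
        ((⋂ x, {p : Ω → ℝ | 0 ≤ p x}) ∩ {p | ∑ x, p x = 1}) ∩ ⋂ g ∈ K, {p | b g ≤ ip p g} := by
      ext p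
      simp [IsPMV, Set.mem_iInter, and_assoc]
    rw [this]
    refine IsClosed.inter (IsClosed.inter ?_ ?_) ?_
    · exact isClosed_iInter fun x => isClosed_le continuous_const (continuous_apply x)
    · exact isClosed_eq (continuous_finset_sum _ fun x _ => continuous_apply x) continuous_const
    · exact isClosed_biInter fun g _ => isClosed_le continuous_const (ip_continuous g)
  have hMpmv : ∀ p ∈ M, IsPMV p := by
    intro p hp; rw [hM] at hp; exact hp.1
  have hMcomp : IsCompact M := by
    apply Metric.isCompact_of_isClosed_isBounded hMclosed
    apply (Metric.isBounded_closedBall (x := (0 : Ω → ℝ)) (r := 1)).subset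
    intro p hp
    have hpmv := hMpmv p hp
    rw [Metric.mem_closedBall, dist_zero_right]
    apply pi_norm_le_iff_of_nonneg zero_le_one |>.2
    intro x
    rw [Real.norm_eq_abs, abs_le]
    exact ⟨by linarith [hpmv.1 x], pmv_le_one hpmv x⟩
  have hMconv : Convex ℝ M := by
    rw [hM]
    intro p hp q hq a c ha hc hac
    refine ⟨⟨fun x => ?_, ?_⟩, fun g hg => ?_⟩
    · have := hp.1.1 x; have := hq.1.1 x
      simp only [Pi.add_apply, Pi.smul_apply, smul_eq_mul]
      nlinarith
    · simp only [Pi.add_apply, Pi.smul_apply, smul_eq_mul, Finset.sum_add_distrib,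
        ← Finset.mul_sum, hp.1.2, hq.1.2]
      linarith
    · rw [ip_combo]
      have h1 := mul_le_mul_of_nonneg_left (hp.2 g hg) ha
      have h2 := mul_le_mul_of_nonneg_left (hq.2 g hg) hc
      have h3 : a * b g + c * b g = b g := by rw [← add_mul, hac, one_mul]
      linarith
  -- membership of extension credal sets in M
  have hsub₁ : M₁ ⊆ M := by
    intro p hp
    rw [hM]
    refine ⟨hpmv₁ p hp, fun g hg => ?_⟩
    rw [← hb₁ g hg]
    exact (hlP g).2 ⟨p, hp, rfl⟩
  have hsub₂ : M₂ ⊆ M := by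
    intro p hp
    rw [hM]
    refine ⟨hpmv₂ p hp, fun g hg => ?_⟩
    rw [← hb₂ g hg]
    exact (hlP' g).2 ⟨p, hp, rfl⟩
  -- key lemma, for one extension
  have key : ∀ (N : Set (Ω → ℝ)), N ⊆ M →
      ∀ (lQ : (Ω → ℝ) → ℝ),
      (∀ h : Ω → ℝ, IsLeast {r : ℝ | ∃ p ∈ N, r = ip p h} (lQ h)) →
      (∀ g ∈ K, lQ g = b g) →
      ∀ (h : Ω → ℝ), ∀ f ∈ K,
        lQ h ≤ sSup {s : ℝ | ∃ F ∈ Set.extremePoints ℝ {q ∈ M | ip q f = lE f}, s = ip F h} := by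
    intro N hsub lQ hlQ hbQ h f hf
    obtain ⟨p, hpN, hpf⟩ := (hlQ f).1
    have hpM : p ∈ M := hsub hpN
    have hpface : p ∈ {q ∈ M | ip q f = lE f} := by
      refine ⟨hpM, ?_⟩
      rw [← hpf, hbQ f hf, hcoh f hf]
    have hfacecomp : IsCompact {q ∈ M | ip q f = lE f} := by
      apply hMcomp.of_isClosed_subset
      · exact hMclosed.inter (isClosed_eq (ip_continuous f) continuous_const)
      · exact Set.sep_subset _ _
    have hfaceconv : Convex ℝ {q ∈ M | ip q f = lE f} := by
      intro x hx y hy a c ha hc hac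
      refine ⟨hMconv hx.1 hy.1 ha hc hac, ?_⟩
      rw [ip_combo, hx.2, hy.2, ← add_mul, hac, one_mul]
    have hbound : ∀ q ∈ {q ∈ M | ip q f = lE f}, ip q h ≤ ∑ x, |h x| := fun q hq =>
      ip_le_bound (hMpmv q hq.1) h
    calc lQ h ≤ ip p h := (hlQ h).2 ⟨p, hpN, rfl⟩
      _ ≤ _ := le_sSup_extreme h hfacecomp hfaceconv hbound hpface
  -- lE below the extensions
  have hlow : ∀ (N : Set (Ω → ℝ)), N ⊆ M →
      ∀ (lQ : (Ω → ℝ) → ℝ),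
      (∀ h : Ω → ℝ, IsLeast {r : ℝ | ∃ p ∈ N, r = ip p h} (lQ h)) →
      ∀ (h : Ω → ℝ), lE h ≤ lQ h := by
    intro N hsub lQ hlQ h
    obtain ⟨p, hpN, hph⟩ := (hlQ h).1
    rw [hph]
    exact (hlE h).2 ⟨p, hsub hpN, rfl⟩
  intro h
  set T := {r : ℝ | ∃ f ∈ K,
    r = sSup {s : ℝ | ∃ F ∈ Set.extremePoints ℝ {q ∈ M | ip q f = lE f}, s = ip F h}} with hT
  have hTne : T.Nonempty := by
    obtain ⟨f, hf⟩ := hK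
    exact ⟨_, f, hf, rfl⟩
  have h1 : lP h ≤ sInf T := by
    apply le_csInf hTne
    rintro r ⟨f, hf, rfl⟩
    exact key M₁ hsub₁ lP hlP hb₁ h f hf
  have h2 : lP' h ≤ sInf T := by
    apply le_csInf hTne
    rintro r ⟨f, hf, rfl⟩
    exact key M₂ hsub₂ lP' hlP' hb₂ h f hf
  have h3 : lE h ≤ lP h := hlow M₁ hsub₁ lP hlP h
  have h4 : lE h ≤ lP' h := hlow M₂ hsub₂ lP' hlP' h
  rw [abs_sub_le_iff]
  constructor <;> linarith
end
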